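/- (Theorem 3.1, case x ≥ 1, y ≥ 1.) Let 0 < β < α < 1, β < θ < 1 and β < αθ, let p_ε be the NoGeAR(1) innovation pmf and p1 the one-step transition function of the NoGeAR(1) chain, and set A = ∑_{k=1}^{∞} α^k p_ε(k) and B(x,k) as in the Chapman–Kolmogorov setup. Then for all integers x ≥ 1 and y ≥ 1, the two-step ahead transition probability from state y to state x satisfies ∑_{k=0}^{∞} p1(y,k)·p1(k,x) = α^y·p_ε(x)·(1−αθ+A) + p_ε(x)·∑_{k=1}^{∞} α^k·B(k,y) + α^y·∑_{k=1}^{∞} p_ε(k)·B(x,k) + ∑_{k=1}^{∞} B(x,k)·B(k,y), all series being convergent. -/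

import Mathlib

/-- NoGeAR(1) innovation pmf. -/
noncomputable def pEps (α β θ : ℝ) (x : ℕ) : ℝ :=
  ((α * θ - β) / (θ - β)) * θ ^ x * (1 - θ)
    + (1 - (α * θ - β) / (θ - β)) * β ^ x * (1 - β)

/-- One-step transition probabilities of the NoGeAR(1) chain (Eq. (4)). -/
noncomputable def p1 (α β θ : ℝ) (y x : ℕ) : ℝ :=
  if y = 0 then
    (if x = 0 then 1 - α * θ else pEps α β θ x)
  else if x = 0 then α ^ y * (1 - α * θ)
  else
    α ^ y * pEps α β θ x
      + ∑ m ∈ Finset.Icc 1 x, ∑ j ∈ Finset.Icc 1 (min m y),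
          (y.choose j : ℝ) * ((m - 1).choose (j - 1) : ℝ) *
            ((1 - α) * (1 - β)) ^ j * α ^ (y - j) * β ^ (m - j) * pEps α β θ (x - m)

/-- The quantity `A = ∑_{k=1}^∞ α^k p_ε(k)` of Theorem 3.1. -/
noncomputable def Aconst (α β θ : ℝ) : ℝ :=
  ∑' k : ℕ, α ^ (k + 1) * pEps α β θ (k + 1)

/-- The quantity `B(x,k)` of Theorem 3.1 (for x, k ≥ 1). -/
noncomputable def Bfun (α β θ : ℝ) (x k : ℕ) : ℝ :=
  ∑ m ∈ Finset.Icc 1 x, ∑ j ∈ Finset.Icc 1 (min m k),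
    (k.choose j : ℝ) * ((m - 1).choose (j - 1) : ℝ) *
      ((1 - α) * (1 - β)) ^ j * α ^ (k - j) * β ^ (m - j) * pEps α β θ (x - m)

section Aux

variable {α β θ : ℝ}

lemma pEps_nonneg (hβ : 0 < β) (hα : α < 1) (hβθ : β < θ) (hθ : θ < 1)
    (hβαθ : β < α * θ) (n : ℕ) : 0 ≤ pEps α β θ n := by
  have hθ0 : 0 < θ := hβ.trans hβθ
  have hL0 : 0 ≤ (α * θ - β) / (θ - β) := div_nonneg (by linarith) (by linarith)
  have hL1 : (α * θ - β) / (θ - β) ≤ 1 := by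
    rw [div_le_one (by linarith)]; nlinarith
  have h1 : 0 ≤ ((α * θ - β) / (θ - β)) * θ ^ n * (1 - θ) :=
    mul_nonneg (mul_nonneg hL0 (pow_nonneg hθ0.le n)) (by linarith)
  have h2 : 0 ≤ (1 - (α * θ - β) / (θ - β)) * β ^ n * (1 - β) :=
    mul_nonneg (mul_nonneg (by linarith) (pow_nonneg hβ.le n)) (by linarith)
  unfold pEps; linarith

lemma pEps_le (hβ : 0 < β) (hα : α < 1) (hβθ : β < θ) (hθ : θ < 1)
    (hβαθ : β < α * θ) (n : ℕ) : pEps α β θ n ≤ 2 * (max θ β) ^ n := by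
  have hθ0 : 0 < θ := hβ.trans hβθ
  have hL0 : 0 ≤ (α * θ - β) / (θ - β) := div_nonneg (by linarith) (by linarith)
  have hL1 : (α * θ - β) / (θ - β) ≤ 1 := by
    rw [div_le_one (by linarith)]; nlinarith
  have hθn : (0:ℝ) ≤ θ ^ n := pow_nonneg hθ0.le n
  have hβn : (0:ℝ) ≤ β ^ n := pow_nonneg hβ.le n
  have k1 : ((α * θ - β) / (θ - β)) * (1 - θ) ≤ 1 :=
    mul_le_one₀ hL1 (by linarith) (by linarith)
  have k2 : (1 - (α * θ - β) / (θ - β)) * (1 - β) ≤ 1 :=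
    mul_le_one₀ (by linarith) (by linarith) (by linarith)
  have h1 : ((α * θ - β) / (θ - β)) * θ ^ n * (1 - θ) ≤ θ ^ n := by
    nlinarith [mul_nonneg hθn (sub_nonneg.mpr k1)]
  have h2 : (1 - (α * θ - β) / (θ - β)) * β ^ n * (1 - β) ≤ β ^ n := by
    nlinarith [mul_nonneg hβn (sub_nonneg.mpr k2)]
  have h3 : θ ^ n ≤ (max θ β) ^ n := pow_le_pow_left₀ hθ0.le (le_max_left θ β) n
  have h4 : β ^ n ≤ (max θ β) ^ n := pow_le_pow_left₀ hβ.le (le_max_right θ β) n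
  unfold pEps; linarith

lemma Bfun_nonneg (hβ : 0 < β) (hβα : β < α) (hα : α < 1) (hβθ : β < θ) (hθ : θ < 1)
    (hβαθ : β < α * θ) (x k : ℕ) : 0 ≤ Bfun α β θ x k := by
  have hα0 : 0 < α := hβ.trans hβα
  unfold Bfun
  refine Finset.sum_nonneg fun m _ => Finset.sum_nonneg fun j _ => ?_
  have hc : (0:ℝ) ≤ (1 - α) * (1 - β) := mul_nonneg (by linarith) (by linarith)
  exact mul_nonneg
    (mul_nonneg
      (mul_nonneg
        (mul_nonneg
          (mul_nonneg (Nat.cast_nonneg _) (Nat.cast_nonneg _))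
          (pow_nonneg hc j))
        (pow_nonneg hα0.le _))
      (pow_nonneg hβ.le _))
    (pEps_nonneg hβ hα hβθ hθ hβαθ _)

lemma Bfun_le_snd (hβ : 0 < β) (hβα : β < α) (hα : α < 1) (hβθ : β < θ) (hθ : θ < 1)
    (hβαθ : β < α * θ) (x k : ℕ) :
    Bfun α β θ x k ≤ ((x:ℝ)^2 * ((x:ℝ)+1)^x * 2 / α^x) * ((k:ℝ)+1)^x * α^k := by
  have hα0 : 0 < α := hβ.trans hβα
  have hθ0 : 0 < θ := hβ.trans hβθ
  have hρ0 : 0 < max θ β := lt_max_of_lt_left hθ0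
  have hρ1 : max θ β ≤ 1 := max_le hθ.le (by linarith)
  set T : ℝ := ((k:ℝ)+1)^x * ((x:ℝ)+1)^x * (2/α^x) * α^k with hT
  have hT0 : 0 ≤ T := by positivity
  have hterm : ∀ m ∈ Finset.Icc 1 x, ∀ j ∈ Finset.Icc 1 (min m k),
      (k.choose j : ℝ) * ((m - 1).choose (j - 1) : ℝ) *
        ((1 - α) * (1 - β)) ^ j * α ^ (k - j) * β ^ (m - j) * pEps α β θ (x - m) ≤ T := by
    intro m hm j hj
    rw [Finset.mem_Icc] at hm hj
    have hjm : j ≤ m := le_trans hj.2 (min_le_left _ _)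
    have hjk : j ≤ k := le_trans hj.2 (min_le_right _ _)
    have hjx : j ≤ x := le_trans hjm hm.2
    have e1 : (k.choose j : ℝ) ≤ ((k:ℝ)+1)^x := by
      have h : k.choose j ≤ (k+1)^x :=
        le_trans (Nat.choose_le_pow k j)
          (le_trans (Nat.pow_le_pow_left (Nat.le_succ k) j)
            (Nat.pow_le_pow_right (Nat.succ_pos k) hjx))
      calc (k.choose j : ℝ) ≤ (((k+1)^x : ℕ) : ℝ) := Nat.cast_le.mpr h
        _ = ((k:ℝ)+1)^x := by push_cast; ring
    have e2 : (((m-1).choose (j-1)) : ℝ) ≤ ((x:ℝ)+1)^x := by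
      have h : (m-1).choose (j-1) ≤ (x+1)^x :=
        le_trans (Nat.choose_le_pow (m-1) (j-1))
          (le_trans (Nat.pow_le_pow_left (by omega) (j-1))
            (Nat.pow_le_pow_right (by omega) (by omega)))
      calc (((m-1).choose (j-1)) : ℝ) ≤ (((x+1)^x : ℕ) : ℝ) := Nat.cast_le.mpr h
        _ = ((x:ℝ)+1)^x := by push_cast; ring
    have e3 : ((1 - α) * (1 - β)) ^ j ≤ 1 :=
      pow_le_one₀ (mul_nonneg (by linarith) (by linarith)) (by nlinarith)
    have e4 : α ^ (k - j) ≤ α ^ k / α ^ x := by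
      rw [pow_sub₀ α (ne_of_gt hα0) hjk, ← div_eq_mul_inv]
      exact div_le_div_of_nonneg_left (pow_nonneg hα0.le k) (pow_pos hα0 x)
        (pow_le_pow_of_le_one hα0.le hα.le hjx)
    have e5 : β ^ (m - j) ≤ 1 := pow_le_one₀ hβ.le (by linarith)
    have e6 : pEps α β θ (x - m) ≤ 2 := by
      have := pEps_le hβ hα hβθ hθ hβαθ (x - m)
      have h2 : (max θ β) ^ (x-m) ≤ 1 := pow_le_one₀ hρ0.le hρ1
      linarith
    have hc : (0:ℝ) ≤ ((1 - α) * (1 - β)) ^ j :=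
      pow_nonneg (mul_nonneg (by linarith) (by linarith)) j
    have hpe : (0:ℝ) ≤ pEps α β θ (x - m) := pEps_nonneg hβ hα hβθ hθ hβαθ _
    calc (k.choose j : ℝ) * ((m - 1).choose (j - 1) : ℝ) *
        ((1 - α) * (1 - β)) ^ j * α ^ (k - j) * β ^ (m - j) * pEps α β θ (x - m)
        ≤ ((k:ℝ)+1)^x * (((x:ℝ)+1)^x) * 1 * (α ^ k / α ^ x) * 1 * 2 := by
          apply mul_le_mul
          apply mul_le_mul
          apply mul_le_mul
          apply mul_le_mul
          apply mul_le_mul e1 e2 (Nat.cast_nonneg _) (by positivity)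
          exact e3; exact hc; positivity
          exact e4; positivity; positivity
          exact e5; exact pow_nonneg hβ.le _; positivity
          exact e6; exact hpe; positivity
      _ = T := by rw [hT]; ring
  have hinner : ∀ m ∈ Finset.Icc 1 x,
      (∑ j ∈ Finset.Icc 1 (min m k),
        (k.choose j : ℝ) * ((m - 1).choose (j - 1) : ℝ) *
          ((1 - α) * (1 - β)) ^ j * α ^ (k - j) * β ^ (m - j) * pEps α β θ (x - m))
        ≤ (x:ℝ) * T := by
    intro m hm
    have hmx : m ≤ x := (Finset.mem_Icc.mp hm).2
    calc (∑ j ∈ Finset.Icc 1 (min m k), _) ≤ ∑ j ∈ Finset.Icc 1 (min m k), T :=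
          Finset.sum_le_sum (hterm m hm)
      _ = ((min m k : ℕ) : ℝ) * T := by
          rw [Finset.sum_const, Nat.card_Icc, nsmul_eq_mul]; norm_num
      _ ≤ (x:ℝ) * T := by
          apply mul_le_mul_of_nonneg_right _ hT0
          exact_mod_cast le_trans (min_le_left m k) hmx
  calc Bfun α β θ x k ≤ ∑ m ∈ Finset.Icc 1 x, (x:ℝ) * T :=
        Finset.sum_le_sum hinner
    _ = (x:ℝ) * ((x:ℝ) * T) := by
        rw [Finset.sum_const, Nat.card_Icc, nsmul_eq_mul]; norm_num
    _ = ((x:ℝ)^2 * ((x:ℝ)+1)^x * 2 / α^x) * ((k:ℝ)+1)^x * α^k := by rw [hT]; ring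

end Aux

section Aux2

variable {α β θ : ℝ}

lemma Bfun_le_fst (hβ : 0 < β) (hβα : β < α) (hα : α < 1) (hβθ : β < θ) (hθ : θ < 1)
    (hβαθ : β < α * θ) (k y : ℕ) :
    Bfun α β θ k y ≤
      ((y:ℝ) * ((y:ℝ)+1)^y * 2 / (max θ β)^y) * ((k:ℝ)+1)^(y+1) * (max θ β)^k := by
  have hα0 : 0 < α := hβ.trans hβα
  have hθ0 : 0 < θ := hβ.trans hβθ
  have hρ0 : 0 < max θ β := lt_max_of_lt_left hθ0
  have hρ1 : max θ β ≤ 1 := max_le hθ.le (by linarith)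
  set ρ : ℝ := max θ β with hρ
  set T : ℝ := ((y:ℝ)+1)^y * ((k:ℝ)+1)^y * (2/ρ^y) * ρ^k with hT
  have hT0 : 0 ≤ T := by positivity
  have hterm : ∀ m ∈ Finset.Icc 1 k, ∀ j ∈ Finset.Icc 1 (min m y),
      (y.choose j : ℝ) * ((m - 1).choose (j - 1) : ℝ) *
        ((1 - α) * (1 - β)) ^ j * α ^ (y - j) * β ^ (m - j) * pEps α β θ (k - m) ≤ T := by
    intro m hm j hj
    rw [Finset.mem_Icc] at hm hj
    have hjm : j ≤ m := le_trans hj.2 (min_le_left _ _)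
    have hjy : j ≤ y := le_trans hj.2 (min_le_right _ _)
    have hmk : m ≤ k := hm.2
    have e1 : (y.choose j : ℝ) ≤ ((y:ℝ)+1)^y := by
      have h : y.choose j ≤ (y+1)^y :=
        le_trans (Nat.choose_le_pow y j)
          (le_trans (Nat.pow_le_pow_left (Nat.le_succ y) j)
            (Nat.pow_le_pow_right (Nat.succ_pos y) hjy))
      calc (y.choose j : ℝ) ≤ (((y+1)^y : ℕ) : ℝ) := Nat.cast_le.mpr h
        _ = ((y:ℝ)+1)^y := by push_cast; ring
    have e2 : (((m-1).choose (j-1)) : ℝ) ≤ ((k:ℝ)+1)^y := by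
      have h : (m-1).choose (j-1) ≤ (k+1)^y :=
        le_trans (Nat.choose_le_pow (m-1) (j-1))
          (le_trans (Nat.pow_le_pow_left (by omega) (j-1))
            (Nat.pow_le_pow_right (by omega) (by omega)))
      calc (((m-1).choose (j-1)) : ℝ) ≤ (((k+1)^y : ℕ) : ℝ) := Nat.cast_le.mpr h
        _ = ((k:ℝ)+1)^y := by push_cast; ring
    have e3 : ((1 - α) * (1 - β)) ^ j ≤ 1 :=
      pow_le_one₀ (mul_nonneg (by linarith) (by linarith)) (by nlinarith)
    have e4 : α ^ (y - j) ≤ 1 := pow_le_one₀ hα0.le hα.le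
    have e5 : β ^ (m - j) ≤ ρ ^ (m - j) := pow_le_pow_left₀ hβ.le (le_max_right θ β) _
    have e6 : pEps α β θ (k - m) ≤ 2 * ρ ^ (k - m) := pEps_le hβ hα hβθ hθ hβαθ _
    have hc : (0:ℝ) ≤ ((1 - α) * (1 - β)) ^ j :=
      pow_nonneg (mul_nonneg (by linarith) (by linarith)) j
    have hpe : (0:ℝ) ≤ pEps α β θ (k - m) := pEps_nonneg hβ hα hβθ hθ hβαθ _
    have hstep : ρ ^ (k - j) ≤ ρ ^ k / ρ ^ y := by
      rw [pow_sub₀ ρ (ne_of_gt hρ0) (le_trans hjm hmk), ← div_eq_mul_inv]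
      exact div_le_div_of_nonneg_left (pow_nonneg hρ0.le k) (pow_pos hρ0 y)
        (pow_le_pow_of_le_one hρ0.le hρ1 hjy)
    calc (y.choose j : ℝ) * ((m - 1).choose (j - 1) : ℝ) *
        ((1 - α) * (1 - β)) ^ j * α ^ (y - j) * β ^ (m - j) * pEps α β θ (k - m)
        ≤ ((y:ℝ)+1)^y * (((k:ℝ)+1)^y) * 1 * 1 * ρ ^ (m - j) * (2 * ρ ^ (k - m)) := by
          apply mul_le_mul
          apply mul_le_mul
          apply mul_le_mul
          apply mul_le_mul
          apply mul_le_mul e1 e2 (Nat.cast_nonneg _) (by positivity)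
          exact e3; exact hc; positivity
          exact e4; positivity; positivity
          exact e5; exact pow_nonneg hβ.le _; positivity
          exact e6; exact hpe; positivity
      _ = 2 * (((y:ℝ)+1)^y * ((k:ℝ)+1)^y) * (ρ ^ (m - j) * ρ ^ (k - m)) := by ring
      _ = 2 * (((y:ℝ)+1)^y * ((k:ℝ)+1)^y) * ρ ^ (k - j) := by
          have hexp : (m - j) + (k - m) = k - j := by omega
          rw [← pow_add, hexp]
      _ ≤ 2 * (((y:ℝ)+1)^y * ((k:ℝ)+1)^y) * (ρ ^ k / ρ ^ y) := by
          apply mul_le_mul_of_nonneg_left hstep (by positivity)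
      _ = T := by rw [hT]; ring
  have hinner : ∀ m ∈ Finset.Icc 1 k,
      (∑ j ∈ Finset.Icc 1 (min m y),
        (y.choose j : ℝ) * ((m - 1).choose (j - 1) : ℝ) *
          ((1 - α) * (1 - β)) ^ j * α ^ (y - j) * β ^ (m - j) * pEps α β θ (k - m))
        ≤ (y:ℝ) * T := by
    intro m hm
    calc (∑ j ∈ Finset.Icc 1 (min m y), _) ≤ ∑ j ∈ Finset.Icc 1 (min m y), T :=
          Finset.sum_le_sum (hterm m hm)
      _ = ((min m y : ℕ) : ℝ) * T := by
          rw [Finset.sum_const, Nat.card_Icc, nsmul_eq_mul]; norm_num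
      _ ≤ (y:ℝ) * T := by
          apply mul_le_mul_of_nonneg_right _ hT0
          exact_mod_cast min_le_right m y
  calc Bfun α β θ k y ≤ ∑ m ∈ Finset.Icc 1 k, (y:ℝ) * T :=
        Finset.sum_le_sum hinner
    _ = (k:ℝ) * ((y:ℝ) * T) := by
        rw [Finset.sum_const, Nat.card_Icc, nsmul_eq_mul]; norm_num
    _ ≤ ((k:ℝ)+1) * ((y:ℝ) * T) := by
        apply mul_le_mul_of_nonneg_right (by linarith) (by positivity)
    _ = ((y:ℝ) * ((y:ℝ)+1)^y * 2 / ρ^y) * ((k:ℝ)+1)^(y+1) * ρ^k := by rw [hT]; ring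

lemma summable_poly_geom {f : ℕ → ℝ} (N : ℕ) (C : ℝ) {r : ℝ} (h0 : 0 < r) (h1 : r < 1)
    (hf0 : ∀ k, 0 ≤ f k) (hf : ∀ k, f k ≤ C * ((k:ℝ)+1)^N * r^k) : Summable f := by
  have base : Summable (fun n : ℕ => (n:ℝ)^N * r^n) :=
    summable_pow_mul_geometric_of_norm_lt_one N
      (by rw [Real.norm_eq_abs, abs_of_pos h0]; exact h1)
  have h2 : Summable (fun k : ℕ => ((k+1:ℕ):ℝ)^N * r^(k+1)) :=
    (summable_nat_add_iff 1).2 base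
  have h3 := h2.mul_left (C / r)
  refine Summable.of_nonneg_of_le hf0 hf (h3.congr fun k => ?_)
  push_cast
  field_simp
  ring

end Aux2

theorem two_step_y_x (α β θ : ℝ) (hβ : 0 < β) (hβα : β < α) (hα : α < 1)
    (hβθ : β < θ) (hθ : θ < 1) (hβαθ : β < α * θ)
    (x y : ℕ) (hx : 1 ≤ x) (hy : 1 ≤ y) :
    Summable (fun k : ℕ => α ^ (k + 1) * Bfun α β θ (k + 1) y) ∧
    Summable (fun k : ℕ => pEps α β θ (k + 1) * Bfun α β θ x (k + 1)) ∧
    Summable (fun k : ℕ => Bfun α β θ x (k + 1) * Bfun α β θ (k + 1) y) ∧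
    HasSum (fun k : ℕ => p1 α β θ y k * p1 α β θ k x)
      (α ^ y * pEps α β θ x * (1 - α * θ + Aconst α β θ)
        + pEps α β θ x * ∑' k : ℕ, α ^ (k + 1) * Bfun α β θ (k + 1) y
        + α ^ y * ∑' k : ℕ, pEps α β θ (k + 1) * Bfun α β θ x (k + 1)
        + ∑' k : ℕ, Bfun α β θ x (k + 1) * Bfun α β θ (k + 1) y) := by
  have hα0 : 0 < α := hβ.trans hβα
  have hθ0 : 0 < θ := hβ.trans hβθ
  set ρ : ℝ := max θ β with hρdef
  have hρ0 : 0 < ρ := lt_max_of_lt_left hθ0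
  have hρ1 : ρ < 1 := max_lt hθ (by linarith)
  set r : ℝ := α * ρ with hrdef
  have hr0 : 0 < r := mul_pos hα0 hρ0
  have hr1 : r < 1 := by nlinarith
  set C₁ : ℝ := (x:ℝ)^2 * ((x:ℝ)+1)^x * 2 / α^x with hC₁
  set C₂ : ℝ := (y:ℝ) * ((y:ℝ)+1)^y * 2 / ρ^y with hC₂
  have hC₁0 : 0 ≤ C₁ := by positivity
  have hC₂0 : 0 ≤ C₂ := by positivity
  -- Summability 1
  have S1 : Summable (fun k : ℕ => α ^ (k + 1) * Bfun α β θ (k + 1) y) := by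
    apply summable_poly_geom (y+1) (C₂ * 2^(y+1) * r) hr0 hr1
    · intro k
      exact mul_nonneg (pow_nonneg hα0.le _) (Bfun_nonneg hβ hβα hα hβθ hθ hβαθ _ _)
    · intro k
      have hb := Bfun_le_fst hβ hβα hα hβθ hθ hβαθ (k+1) y
      push_cast at hb
      calc α ^ (k + 1) * Bfun α β θ (k + 1) y
          ≤ α ^ (k + 1) * (C₂ * ((k:ℝ)+1+1)^(y+1) * ρ^(k+1)) :=
            mul_le_mul_of_nonneg_left hb (pow_nonneg hα0.le _)
        _ ≤ α ^ (k + 1) * (C₂ * (2*((k:ℝ)+1))^(y+1) * ρ^(k+1)) := by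
            have h2 : ((k:ℝ)+1+1)^(y+1) ≤ (2*((k:ℝ)+1))^(y+1) :=
              pow_le_pow_left₀ (by positivity) (by linarith) _
            have := mul_le_mul_of_nonneg_right
              (mul_le_mul_of_nonneg_left h2 hC₂0) (pow_nonneg hρ0.le (k+1))
            exact mul_le_mul_of_nonneg_left this (pow_nonneg hα0.le _)
        _ = (C₂ * 2^(y+1) * r) * ((k:ℝ)+1)^(y+1) * r^k := by rw [hrdef]; simp only [mul_pow]; ring
  -- Summability 2
  have S2 : Summable (fun k : ℕ => pEps α β θ (k + 1) * Bfun α β θ x (k + 1)) := by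
    apply summable_poly_geom x (2 * ρ * C₁ * 2^x * α) hr0 hr1
    · intro k
      exact mul_nonneg (pEps_nonneg hβ hα hβθ hθ hβαθ _) (Bfun_nonneg hβ hβα hα hβθ hθ hβαθ _ _)
    · intro k
      have hb := Bfun_le_snd hβ hβα hα hβθ hθ hβαθ x (k+1)
      push_cast at hb
      have hb2 : Bfun α β θ x (k+1) ≤ C₁ * (2*((k:ℝ)+1))^x * α^(k+1) := by
        refine le_trans hb ?_
        have h2 : ((k:ℝ)+1+1)^x ≤ (2*((k:ℝ)+1))^x :=
          pow_le_pow_left₀ (by positivity) (by linarith) _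
        exact mul_le_mul_of_nonneg_right
          (mul_le_mul_of_nonneg_left h2 hC₁0) (pow_nonneg hα0.le _)
      have hpe := pEps_le hβ hα hβθ hθ hβαθ (k+1)
      calc pEps α β θ (k + 1) * Bfun α β θ x (k + 1)
          ≤ (2 * ρ^(k+1)) * (C₁ * (2*((k:ℝ)+1))^x * α^(k+1)) := by
            apply mul_le_mul hpe hb2 (Bfun_nonneg hβ hβα hα hβθ hθ hβαθ _ _) (by positivity)
        _ = (2 * ρ * C₁ * 2^x * α) * ((k:ℝ)+1)^x * r^k := by rw [hrdef]; simp only [mul_pow]; ring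
  -- Summability 3
  have S3 : Summable (fun k : ℕ => Bfun α β θ x (k + 1) * Bfun α β θ (k + 1) y) := by
    apply summable_poly_geom (x+y+1) (C₁ * C₂ * 2^(x+y+1) * r) hr0 hr1
    · intro k
      exact mul_nonneg (Bfun_nonneg hβ hβα hα hβθ hθ hβαθ _ _)
        (Bfun_nonneg hβ hβα hα hβθ hθ hβαθ _ _)
    · intro k
      have hb1 := Bfun_le_snd hβ hβα hα hβθ hθ hβαθ x (k+1)
      have hb2 := Bfun_le_fst hβ hβα hα hβθ hθ hβαθ (k+1) y
      push_cast at hb1 hb2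
      have h2x : ((k:ℝ)+1+1)^x ≤ (2*((k:ℝ)+1))^x :=
        pow_le_pow_left₀ (by positivity) (by linarith) _
      have h2y : ((k:ℝ)+1+1)^(y+1) ≤ (2*((k:ℝ)+1))^(y+1) :=
        pow_le_pow_left₀ (by positivity) (by linarith) _
      have hb1' : Bfun α β θ x (k+1) ≤ C₁ * (2*((k:ℝ)+1))^x * α^(k+1) :=
        le_trans hb1 (mul_le_mul_of_nonneg_right
          (mul_le_mul_of_nonneg_left h2x hC₁0) (pow_nonneg hα0.le _))
      have hb2' : Bfun α β θ (k+1) y ≤ C₂ * (2*((k:ℝ)+1))^(y+1) * ρ^(k+1) :=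
        le_trans hb2 (mul_le_mul_of_nonneg_right
          (mul_le_mul_of_nonneg_left h2y hC₂0) (pow_nonneg hρ0.le _))
      calc Bfun α β θ x (k + 1) * Bfun α β θ (k + 1) y
          ≤ (C₁ * (2*((k:ℝ)+1))^x * α^(k+1)) * (C₂ * (2*((k:ℝ)+1))^(y+1) * ρ^(k+1)) := by
            apply mul_le_mul hb1' hb2' (Bfun_nonneg hβ hβα hα hβθ hθ hβαθ _ _) (by positivity)
        _ = (C₁ * C₂ * 2^(x+y+1) * r) * ((k:ℝ)+1)^(x+y+1) * r^k := by rw [hrdef]; simp only [mul_pow]; ring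
  -- Summability of A
  have SA : Summable (fun k : ℕ => α ^ (k + 1) * pEps α β θ (k + 1)) := by
    apply summable_poly_geom 0 (2 * r) hr0 hr1
    · intro k
      exact mul_nonneg (pow_nonneg hα0.le _) (pEps_nonneg hβ hα hβθ hθ hβαθ _)
    · intro k
      have hpe := pEps_le hβ hα hβθ hθ hβαθ (k+1)
      calc α ^ (k + 1) * pEps α β θ (k + 1)
          ≤ α ^ (k + 1) * (2 * ρ^(k+1)) :=
            mul_le_mul_of_nonneg_left hpe (pow_nonneg hα0.le _)
        _ = 2 * r * ((k:ℝ)+1)^0 * r^k := by rw [hrdef]; simp only [mul_pow]; ring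
  refine ⟨S1, S2, S3, ?_⟩
  -- Assemble the HasSum
  have hA : HasSum (fun k : ℕ => α ^ (k + 1) * pEps α β θ (k + 1)) (Aconst α β θ) :=
    SA.hasSum
  have h1 := hA.mul_left (α ^ y * pEps α β θ x)
  have h2 := S1.hasSum.mul_left (pEps α β θ x)
  have h3 := S2.hasSum.mul_left (α ^ y)
  have h4 := S3.hasSum
  have htail := ((h1.add h2).add h3).add h4
  have hy0 : ¬ y = 0 := by omega
  have hx0 : ¬ x = 0 := by omega
  have heq : (fun k : ℕ =>
      α ^ y * pEps α β θ x * (α ^ (k + 1) * pEps α β θ (k + 1))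
        + pEps α β θ x * (α ^ (k + 1) * Bfun α β θ (k + 1) y)
        + α ^ y * (pEps α β θ (k + 1) * Bfun α β θ x (k + 1))
        + Bfun α β θ x (k + 1) * Bfun α β θ (k + 1) y)
      = fun k : ℕ => p1 α β θ y (k + 1) * p1 α β θ (k + 1) x := by
    funext k
    have hp1a : p1 α β θ y (k+1) = α ^ y * pEps α β θ (k+1) + Bfun α β θ (k+1) y := by
      unfold p1 Bfun
      rw [if_neg hy0, if_neg (Nat.succ_ne_zero k)]
    have hp1b : p1 α β θ (k+1) x = α ^ (k+1) * pEps α β θ x + Bfun α β θ x (k+1) := by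
      unfold p1 Bfun
      rw [if_neg (Nat.succ_ne_zero k), if_neg hx0]
    rw [hp1a, hp1b]; ring
  rw [heq] at htail
  have H := (hasSum_nat_add_iff (f := fun k : ℕ => p1 α β θ y k * p1 α β θ k x) 1).1 htail
  have hf0 : p1 α β θ y 0 * p1 α β θ 0 x = α ^ y * (1 - α * θ) * pEps α β θ x := by
    unfold p1
    rw [if_neg hy0, if_pos rfl, if_pos rfl, if_neg hx0]
  convert H using 1
  · rfl
  rw [Finset.sum_range_one, hf0]
  ring
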